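/- The Split Cycle voting method satisfies positive involvement: for any profile P and any x ∈ SplitCycle(P), if P' is obtained from P by adding one new voter whose ballot ranks x in first place, then x ∈ SplitCycle(P'). -/

import Mathlib

open scoped Classical

/-- `r` is a strict linear order on the finite set `X`, relating only members of `X`. -/
def IsLinOn (X : Finset ℕ) (r : ℕ → ℕ → Prop) : Prop :=
  (∀ a b, r a b → a ∈ X ∧ b ∈ X) ∧
  (∀ a, ¬ r a a) ∧
  (∀ a b c, r a b → r b c → r a c) ∧
  (∀ a ∈ X, ∀ b ∈ X, a ≠ b → r a b ∨ r b a)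

/-- A profile assigns to each voter in a nonempty finite set of voters a strict linear
order (ballot) on a nonempty finite set of candidates.  Voters and candidates are both
drawn from the infinite set `ℕ`. -/
structure Profile where
  voters : Finset ℕ
  cands : Finset ℕ
  voters_nonempty : voters.Nonempty
  cands_nonempty : cands.Nonempty
  ballot : ℕ → ℕ → ℕ → Prop
  ballot_lin : ∀ i ∈ voters, IsLinOn cands (ballot i)

/-- `F` is a voting method: it assigns to each profile a nonempty set of winners
among the candidates of the profile. -/
def VotingMethod (F : Profile → Finset ℕ) : Prop :=
  ∀ P : Profile, (F P).Nonempty ∧ F P ⊆ P.cands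

/-- The ballot `r` ranks `x` in first place among the candidates in `X`. -/
def RanksFirst (X : Finset ℕ) (r : ℕ → ℕ → Prop) (x : ℕ) : Prop :=
  x ∈ X ∧ ∀ y ∈ X, y ≠ x → r x y

/-- `P'` is obtained from `P` by adding one new voter `j` whose ballot ranks `x` in
first place. -/
def AddVoter (P P' : Profile) (j x : ℕ) : Prop :=
  P'.cands = P.cands ∧ j ∉ P.voters ∧ P'.voters = insert j P.voters ∧
  (∀ i ∈ P.voters, ∀ a b, (P'.ballot i a b ↔ P.ballot i a b)) ∧
  RanksFirst P.cands (P'.ballot j) x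

/-- `F` satisfies positive involvement (PI). -/
def SatisfiesPI (F : Profile → Finset ℕ) : Prop :=
  ∀ (P P' : Profile) (j x : ℕ), x ∈ F P → AddVoter P P' j x → x ∈ F P'

/-- The margin of `a` over `b` in the profile `P`. -/
noncomputable def marginP (P : Profile) (a b : ℕ) : ℤ :=
  ((P.voters.filter (fun i => P.ballot i a b)).card : ℤ) -
    ((P.voters.filter (fun i => P.ballot i b a)).card : ℤ)

/-- `l` is a majority cycle in `P`: a sequence of candidates, distinct except that the
first and last entries are equal, with a positive margin along each step. -/
def IsCycle (P : Profile) (l : List ℕ) : Prop :=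
  2 ≤ l.length ∧ l.head? = l.getLast? ∧ l.dropLast.Nodup ∧
  (∀ x ∈ l, x ∈ P.cands) ∧ l.Chain' (fun u v => 0 < marginP P u v)

/-- `a` defeats `b` in `P` according to Split Cycle: the margin of `a` over `b` is
positive and greater than the strength (minimal margin along the cycle) of every
majority cycle containing `a` and `b`. -/
def SCdefeats (P : Profile) (a b : ℕ) : Prop :=
  0 < marginP P a b ∧
  ∀ l : List ℕ, IsCycle P l → a ∈ l → b ∈ l →
    ∃ p ∈ l.zip l.tail, marginP P p.1 p.2 < marginP P a b

/-- The Split Cycle winners: the candidates not defeated by any candidate. -/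
noncomputable def SplitCycle (P : Profile) : Finset ℕ :=
  P.cands.filter (fun x => ¬ ∃ y ∈ P.cands, SCdefeats P y x)

lemma chain'_iff_zip {α : Type*} (R : α → α → Prop) :
    ∀ l : List α, l.Chain' R ↔ ∀ p ∈ l.zip l.tail, R p.1 p.2
  | [] => by simp [List.Chain']
  | [a] => by simp [List.Chain']
  | a :: b :: t => by
    show List.IsChain R (a :: b :: t) ↔ _
    rw [List.isChain_cons_cons, show List.IsChain R (b :: t) ↔ _ from chain'_iff_zip R (b :: t)]
    simp only [List.tail_cons, List.zip_cons_cons, List.mem_cons]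
    constructor
    · rintro ⟨hab, h⟩ p hp
      rcases hp with rfl | hp
      · exact hab
      · exact h p hp
    · intro h
      exact ⟨h (a, b) (Or.inl rfl), fun p hp => h p (Or.inr hp)⟩

lemma marginP_self (P : Profile) (a : ℕ) : marginP P a a = 0 := by
  simp [marginP]

/-- Split Cycle satisfies positive involvement. -/
theorem splitCycle_satisfies_PI : SatisfiesPI SplitCycle := by
  intro P P' j x hx hadd
  obtain ⟨hc, hjv, hv, hb, hxc, hfirst⟩ := hadd
  have hjmem : j ∈ P'.voters := by rw [hv]; exact Finset.mem_insert_self _ _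
  have hlin := P'.ballot_lin j hjmem
  have hasym : ∀ a b, P'.ballot j a b → ¬ P'.ballot j b a := fun a b h h' =>
    hlin.2.1 a (hlin.2.2.1 a b a h h')
  have hmem : x ∈ P.cands ∧ ¬ ∃ y ∈ P.cands, SCdefeats P y x := by
    simpa [SplitCycle] using hx
  -- the margin formula
  have hcard : ∀ a b : ℕ,
      ((P'.voters.filter (fun i => P'.ballot i a b)).card : ℤ) =
        ((P.voters.filter (fun i => P.ballot i a b)).card : ℤ) +
          (if P'.ballot j a b then 1 else 0) := by
    intro a b
    have hfc : P.voters.filter (fun i => P'.ballot i a b) =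
        P.voters.filter (fun i => P.ballot i a b) :=
      Finset.filter_congr (fun i hi => by simp [hb i hi a b])
    rw [hv, Finset.filter_insert]
    split_ifs with h
    · rw [Finset.card_insert_of_notMem (fun hm => hjv (Finset.mem_of_mem_filter _ hm)),
        hfc]
      push_cast; ring
    · rw [hfc]; ring
  have hmargin : ∀ a b : ℕ, marginP P' a b = marginP P a b +
      ((if P'.ballot j a b then 1 else 0) - (if P'.ballot j b a then 1 else 0)) := by
    intro a b
    unfold marginP
    rw [hcard a b, hcard b a]; ring
  have hge : ∀ a b : ℕ, marginP P a b - 1 ≤ marginP P' a b := by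
    intro a b
    rw [hmargin a b]
    split_ifs <;> linarith
  -- suppose towards contradiction that some y defeats x in P'
  refine Finset.mem_filter.2 ⟨by rw [hc]; exact hmem.1, ?_⟩
  rintro ⟨y, hyc, hpos', hdef'⟩
  have hyx : y ≠ x := by
    rintro rfl
    rw [marginP_self] at hpos'
    exact lt_irrefl 0 hpos'
  have hyc' : y ∈ P.cands := by rwa [hc] at hyc
  have hxy : P'.ballot j x y := hfirst y hyc' hyx
  have hnyx : ¬ P'.ballot j y x := hasym _ _ hxy
  have hm : marginP P' y x = marginP P y x - 1 := by
    rw [hmargin y x]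
    simp [hxy, hnyx]; ring
  have hpos : 0 < marginP P y x := by linarith
  have hnd : ¬ SCdefeats P y x := fun h => hmem.2 ⟨y, hyc', h⟩
  unfold SCdefeats at hnd
  push_neg at hnd
  obtain ⟨l, hcyc, hyl, hxl, hstrong⟩ := hnd hpos
  have hcyc' : IsCycle P' l := by
    obtain ⟨h1, h2, h3, h4, h5⟩ := hcyc
    refine ⟨h1, h2, h3, fun z hz => by rw [hc]; exact h4 z hz, ?_⟩
    rw [chain'_iff_zip]
    intro p hp
    have h6 := hstrong p hp
    have h7 := hge p.1 p.2
    linarith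
  obtain ⟨p, hp, hlt⟩ := hdef' l hcyc' hyl hxl
  have h6 := hstrong p hp
  have h7 := hge p.1 p.2
  linarith
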